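/- The limit as m → ∞ (with n = 4m+2) of 4·(∑_{k=1}^{(n-2)/4} (cos((2k-1)π/(2n-2)) − cos(kπ/(n+1))) + ∑_{k=(n+2)/4}^{n/2} (cos(kπ/(n+1)) − cos((2k-1)π/(2n-2)))) equals (8 − 8√2 + 2π)/π. -/

import Mathlib

open Real Filter Finset

noncomputable def eps (m : ℕ) : ℝ := Real.pi / (16*m+4)
noncomputable def del (m : ℕ) : ℝ := Real.pi / (16*m+12)

noncomputable def G (m : ℕ) : ℝ :=
  2 + (Real.sqrt 2 - 1) *
      ((Real.sin ((del m - eps m)/2) / ((del m - eps m)/2)) * Real.cos ((del m + eps m)/2)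
        * ((eps m / Real.sin (eps m)) * (del m / Real.sin (del m))) * (-8/Real.pi))
    + (Real.sin (eps m)/(1+Real.cos (eps m)) * ((1+2*Real.cos (eps m))/Real.cos (eps m))
        - Real.sqrt 2/Real.cos (eps m))
    + (Real.sin (del m)/((1+Real.cos (del m)) * Real.cos (del m)) + Real.sqrt 2/Real.cos (del m))

lemma sum_cos_even (x : ℝ) (hx : Real.sin x ≠ 0) (N : ℕ) :
    ∑ k ∈ Finset.Icc 1 N, Real.cos (2 * (k:ℝ) * x)
      = (Real.sin ((2*(N:ℝ)+1)*x) - Real.sin x) / (2 * Real.sin x) := by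
  induction N with
  | zero => simp
  | succ n ih =>
    rw [Finset.sum_Icc_succ_top (by omega), ih]
    have key : Real.sin ((2*((n:ℝ)+1)+1)*x) - Real.sin ((2*(n:ℝ)+1)*x)
        = 2 * Real.sin x * Real.cos (2*((n:ℝ)+1)*x) := by
      rw [Real.sin_sub_sin]; ring_nf
    push_cast
    field_simp
    linear_combination (norm := ring_nf) -key

lemma sum_cos_odd (x : ℝ) (hx : Real.sin x ≠ 0) (N : ℕ) :
    ∑ k ∈ Finset.Icc 1 N, Real.cos ((2 * (k:ℝ) - 1) * x)
      = Real.sin (2*(N:ℝ)*x) / (2 * Real.sin x) := by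
  induction N with
  | zero => simp
  | succ n ih =>
    rw [Finset.sum_Icc_succ_top (by omega), ih]
    have key : Real.sin (2*((n:ℝ)+1)*x) - Real.sin (2*(n:ℝ)*x)
        = 2 * Real.sin x * Real.cos ((2*((n:ℝ)+1)-1)*x) := by
      rw [Real.sin_sub_sin]; ring_nf
    push_cast
    field_simp
    linear_combination (norm := ring_nf) -key

lemma eps_pos (m : ℕ) : 0 < eps m := by unfold eps; positivity
lemma del_pos (m : ℕ) : 0 < del m := by unfold del; positivity
lemma eps_le (m : ℕ) : eps m ≤ Real.pi/4 := by
  unfold eps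
  have hm : (0:ℝ) ≤ (m:ℝ) := Nat.cast_nonneg m
  apply div_le_div_of_nonneg_left Real.pi_pos.le (by norm_num) (by linarith)
lemma del_le (m : ℕ) : del m ≤ Real.pi/4 := by
  unfold del
  have hm : (0:ℝ) ≤ (m:ℝ) := Nat.cast_nonneg m
  apply div_le_div_of_nonneg_left Real.pi_pos.le (by norm_num) (by linarith)
lemma del_lt_eps (m : ℕ) : del m < eps m := by
  unfold eps del
  apply div_lt_div_of_pos_left Real.pi_pos (by positivity) (by norm_num)
lemma sin_eps_pos (m : ℕ) : 0 < Real.sin (eps m) :=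
  Real.sin_pos_of_pos_of_lt_pi (eps_pos m) (lt_of_le_of_lt (eps_le m) (by linarith [Real.pi_pos]))
lemma sin_del_pos (m : ℕ) : 0 < Real.sin (del m) :=
  Real.sin_pos_of_pos_of_lt_pi (del_pos m) (lt_of_le_of_lt (del_le m) (by linarith [Real.pi_pos]))
lemma cos_eps_pos (m : ℕ) : 0 < Real.cos (eps m) :=
  Real.cos_pos_of_mem_Ioo ⟨by linarith [eps_pos m, Real.pi_pos], lt_of_le_of_lt (eps_le m) (by linarith [Real.pi_pos])⟩
lemma cos_del_pos (m : ℕ) : 0 < Real.cos (del m) :=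
  Real.cos_pos_of_mem_Ioo ⟨by linarith [del_pos m, Real.pi_pos], lt_of_le_of_lt (del_le m) (by linarith [Real.pi_pos])⟩
lemma sin_two_eps_pos (m : ℕ) : 0 < Real.sin (2 * eps m) :=
  Real.sin_pos_of_pos_of_lt_pi (by linarith [eps_pos m]) (by linarith [eps_le m, Real.pi_pos])
lemma sin_two_del_pos (m : ℕ) : 0 < Real.sin (2 * del m) :=
  Real.sin_pos_of_pos_of_lt_pi (by linarith [del_pos m]) (by linarith [del_le m, Real.pi_pos])

lemma part1 (m : ℕ) :
    (Real.sin ((del m - eps m)/2) / ((del m - eps m)/2)) * Real.cos ((del m + eps m)/2)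
      * ((eps m / Real.sin (eps m)) * (del m / Real.sin (del m))) * (-8/Real.pi)
    = 1/Real.sin (eps m) - 1/Real.sin (del m) := by
  have hπ := Real.pi_pos.ne'
  have he := (eps_pos m).ne'
  have hd := (del_pos m).ne'
  have hse := (sin_eps_pos m).ne'
  have hsd := (sin_del_pos m).ne'
  have hη : del m - eps m ≠ 0 := by have := del_lt_eps m; intro h; linarith [h]
  have hed : (del m - eps m) * Real.pi = -8 * (eps m * del m) := by
    unfold eps del; field_simp; ring
  have hss : Real.sin (del m) - Real.sin (eps m)
      = 2 * Real.sin ((del m - eps m)/2) * Real.cos ((del m + eps m)/2) :=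
    Real.sin_sub_sin _ _
  field_simp
  linear_combination (-(Real.sin (del m) - Real.sin (eps m)))*hed + (8*eps m*del m)*hss

lemma lhs_eq (m : ℕ) :
    (4 : ℝ) *
        ((∑ k ∈ Finset.Icc 1 ((4 * m + 2 - 2) / 4),
            (Real.cos ((2 * (k : ℝ) - 1) * Real.pi / (2 * (4 * (m : ℝ) + 2) - 2)) -
              Real.cos ((k : ℝ) * Real.pi / ((4 * (m : ℝ) + 2) + 1)))) +
          ∑ k ∈ Finset.Icc ((4 * m + 2 + 2) / 4) ((4 * m + 2) / 2),
            (Real.cos ((k : ℝ) * Real.pi / ((4 * (m : ℝ) + 2) + 1)) -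
              Real.cos ((2 * (k : ℝ) - 1) * Real.pi / (2 * (4 * (m : ℝ) + 2) - 2))))
    = G m := by
  have hπ := Real.pi_pos
  have hm0 : (0:ℝ) ≤ (m:ℝ) := Nat.cast_nonneg m
  have hN1 : (4*m+2-2)/4 = m := by omega
  have hN2 : (4*m+2+2)/4 = m+1 := by omega
  have hN3 : (4*m+2)/2 = 2*m+1 := by omega
  rw [hN1, hN2, hN3]
  have hc1 : ∀ k : ℕ, Real.cos ((k : ℝ) * Real.pi / ((4 * (m : ℝ) + 2) + 1))
      = Real.cos (2*(k:ℝ)*(2*del m)) := by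
    intro k; congr 1; unfold del
    have h1 : (16*(m:ℝ)+12) ≠ 0 := by positivity
    have h2 : (4*(m:ℝ)+2+1) ≠ 0 := by positivity
    field_simp
    ring
  have hc2 : ∀ k : ℕ, Real.cos ((2 * (k : ℝ) - 1) * Real.pi / (2 * (4 * (m : ℝ) + 2) - 2))
      = Real.cos ((2*(k:ℝ)-1)*(2*eps m)) := by
    intro k; congr 1; unfold eps
    have h82 : (2:ℝ)*(4*(m:ℝ)+2)-2 = 8*(m:ℝ)+2 := by ring
    have h1 : (16*(m:ℝ)+4) ≠ 0 := by positivity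
    have h2 : (8*(m:ℝ)+2) ≠ 0 := by positivity
    rw [h82]
    field_simp
    ring
  simp only [hc1, hc2]
  have hsplit : ∀ f : ℕ → ℝ, (∑ k ∈ Finset.Icc (m+1) (2*m+1), f k)
      = ∑ k ∈ Finset.Icc 1 (2*m+1), f k - ∑ k ∈ Finset.Icc 1 m, f k := by
    intro f
    have hU : Finset.Icc 1 (2*m+1) = Finset.Icc 1 m ∪ Finset.Icc (m+1) (2*m+1) := by
      ext k; simp only [Finset.mem_Icc, Finset.mem_union]; omega
    have hD : Disjoint (Finset.Icc 1 m) (Finset.Icc (m+1) (2*m+1)) := by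
      rw [Finset.disjoint_left]; intro a ha hb
      simp only [Finset.mem_Icc] at ha hb; omega
    rw [hU, Finset.sum_union hD]; ring
  rw [Finset.sum_sub_distrib, Finset.sum_sub_distrib, hsplit, hsplit]
  have hs2e := (sin_two_eps_pos m).ne'
  have hs2d := (sin_two_del_pos m).ne'
  rw [sum_cos_odd _ hs2e, sum_cos_odd _ hs2e, sum_cos_even _ hs2d, sum_cos_even _ hs2d]
  have ha1 : 2*(m:ℝ)*(2*eps m) = Real.pi/4 - eps m := by unfold eps; field_simp; ring
  have ha2 : 2*((2*m+1:ℕ):ℝ)*(2*eps m) = Real.pi/2 + 2*eps m := by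
    push_cast; unfold eps; field_simp; ring
  have ha3 : (2*(m:ℝ)+1)*(2*del m) = Real.pi/4 - del m := by unfold del; field_simp; ring
  have ha4 : (2*((2*m+1:ℕ):ℝ)+1)*(2*del m) = Real.pi/2 := by
    push_cast; unfold del; field_simp; ring
  rw [ha1, ha2, ha3, ha4]
  simp only [G]
  rw [part1 m]
  simp only [Real.sin_sub, Real.sin_add, Real.sin_pi_div_four, Real.cos_pi_div_four,
    Real.sin_pi_div_two, Real.cos_pi_div_two, Real.sin_two_mul, Real.cos_two_mul,
    one_mul, zero_mul, mul_zero, add_zero, mul_one]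
  have hr : Real.sqrt 2 ^ 2 = 2 := Real.sq_sqrt (by norm_num)
  have hpe : Real.sin (eps m) ^ 2 + Real.cos (eps m) ^ 2 = 1 := Real.sin_sq_add_cos_sq _
  have hpd : Real.sin (del m) ^ 2 + Real.cos (del m) ^ 2 = 1 := Real.sin_sq_add_cos_sq _
  have hse := (sin_eps_pos m).ne'
  have hsd := (sin_del_pos m).ne'
  have hce := (cos_eps_pos m).ne'
  have hcd := (cos_del_pos m).ne'
  have h1e : 1 + Real.cos (eps m) ≠ 0 := by linarith [cos_eps_pos m]
  have h1d : 1 + Real.cos (del m) ≠ 0 := by linarith [cos_del_pos m]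
  field_simp
  linear_combination ((-16:ℝ)*(Real.cos (eps m))^1*(Real.sin (del m))^1*(Real.cos (del m))^2 + (-16:ℝ)*(Real.cos (eps m))^1*(Real.sin (del m))^1*(Real.cos (del m))^1 + (-8:ℝ)*(Real.sin (del m))^1*(Real.cos (del m))^2 + (-8:ℝ)*(Real.sin (del m))^1*(Real.cos (del m))^1) * hpe + ((-8:ℝ)*(Real.sin (eps m))^1*(Real.cos (eps m))^2 + (-8:ℝ)*(Real.sin (eps m))^1*(Real.cos (eps m))^1) * hpd

lemma sin_div_self_lim : Tendsto (fun x : ℝ => Real.sin x / x) (nhdsWithin 0 {x | x ≠ 0}) (nhds 1) := by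
  have h := Real.hasDerivAt_sin 0
  rw [hasDerivAt_iff_tendsto_slope] at h
  have hs : slope Real.sin 0 = fun x => Real.sin x / x := by
    funext x; simp [slope_def_field]
  rw [hs, Real.cos_zero] at h
  exact h

lemma tendsto_aux (s : ℕ → ℝ) (h0 : Tendsto s atTop (nhds 0)) (hne : ∀ m, s m ≠ 0) :
    Tendsto (fun m => Real.sin (s m) / s m) atTop (nhds 1) := by
  apply sin_div_self_lim.comp
  exact tendsto_nhdsWithin_of_tendsto_nhds_of_eventually_within s h0
    (Eventually.of_forall hne)

lemma tendsto_aux' (s : ℕ → ℝ) (h0 : Tendsto s atTop (nhds 0)) (hne : ∀ m, s m ≠ 0) :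
    Tendsto (fun m => s m / Real.sin (s m)) atTop (nhds 1) := by
  have h := (tendsto_aux s h0 hne).inv₀ one_ne_zero
  simp only [inv_div, inv_one] at h
  exact h

lemma eps_lim : Tendsto eps atTop (nhds 0) := by
  have h16 : Tendsto (fun m : ℕ => (16:ℝ)*m+4) atTop atTop := by
    apply tendsto_atTop_add_const_right
    exact (tendsto_natCast_atTop_atTop (R := ℝ)).const_mul_atTop (by norm_num)
  exact tendsto_const_nhds.div_atTop h16

lemma del_lim : Tendsto del atTop (nhds 0) := by
  have h16 : Tendsto (fun m : ℕ => (16:ℝ)*m+12) atTop atTop := by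
    apply tendsto_atTop_add_const_right
    exact (tendsto_natCast_atTop_atTop (R := ℝ)).const_mul_atTop (by norm_num)
  exact tendsto_const_nhds.div_atTop h16

lemma cos_eps_lim : Tendsto (fun m => Real.cos (eps m)) atTop (nhds 1) := by
  have := (Real.continuous_cos.tendsto 0).comp eps_lim
  simpa [Function.comp_def] using this

lemma cos_del_lim : Tendsto (fun m => Real.cos (del m)) atTop (nhds 1) := by
  have := (Real.continuous_cos.tendsto 0).comp del_lim
  simpa [Function.comp_def] using this

lemma sin_eps_lim : Tendsto (fun m => Real.sin (eps m)) atTop (nhds 0) := by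
  have := (Real.continuous_sin.tendsto 0).comp eps_lim
  simpa [Function.comp_def] using this

lemma sin_del_lim : Tendsto (fun m => Real.sin (del m)) atTop (nhds 0) := by
  have := (Real.continuous_sin.tendsto 0).comp del_lim
  simpa [Function.comp_def] using this

lemma eta_lim : Tendsto (fun m => (del m - eps m)/2) atTop (nhds 0) := by
  have := (del_lim.sub eps_lim).div_const 2
  simpa using this

lemma cos_mid_lim : Tendsto (fun m => Real.cos ((del m + eps m)/2)) atTop (nhds 1) := by
  have h : Tendsto (fun m => (del m + eps m)/2) atTop (nhds 0) := by
    have := (del_lim.add eps_lim).div_const 2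
    simpa using this
  have := (Real.continuous_cos.tendsto 0).comp h
  simpa [Function.comp_def] using this

lemma tendsto_G : Tendsto G atTop
    (nhds ((8 - 8 * Real.sqrt 2 + 2 * Real.pi) / Real.pi)) := by
  have hT1 : Tendsto (fun m => Real.sin ((del m - eps m)/2) / ((del m - eps m)/2))
      atTop (nhds 1) := by
    apply tendsto_aux _ eta_lim
    intro m
    have := del_lt_eps m
    intro h
    have : del m - eps m = 0 := by linarith
    linarith [del_lt_eps m]
  have hT2 : Tendsto (fun m => eps m / Real.sin (eps m)) atTop (nhds 1) :=
    tendsto_aux' eps eps_lim (fun m => (eps_pos m).ne')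
  have hT3 : Tendsto (fun m => del m / Real.sin (del m)) atTop (nhds 1) :=
    tendsto_aux' del del_lim (fun m => (del_pos m).ne')
  have hbig : Tendsto G atTop (nhds
      (2 + (Real.sqrt 2 - 1) * (1 * 1 * (1 * 1) * (-8/Real.pi))
        + (0/(1+1) * ((1+2*1)/1) - Real.sqrt 2/1)
        + (0/((1+1)*1) + Real.sqrt 2/1))) := by
    unfold G
    apply Tendsto.add
    apply Tendsto.add
    apply Tendsto.add
    · exact tendsto_const_nhds
    · exact Tendsto.const_mul _
        (((hT1.mul cos_mid_lim).mul (hT2.mul hT3)).mul tendsto_const_nhds)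
    · exact Tendsto.sub
        ((sin_eps_lim.div (tendsto_const_nhds.add cos_eps_lim) (by norm_num)).mul
          ((tendsto_const_nhds.add (cos_eps_lim.const_mul 2)).div cos_eps_lim (by norm_num)))
        (tendsto_const_nhds.div cos_eps_lim (by norm_num))
    · exact Tendsto.add
        (sin_del_lim.div ((tendsto_const_nhds.add cos_del_lim).mul cos_del_lim) (by norm_num))
        (tendsto_const_nhds.div cos_del_lim (by norm_num))
  have hval : (2 + (Real.sqrt 2 - 1) * (1 * 1 * (1 * 1) * (-8/Real.pi))
        + (0/(1+1) * ((1+2*1)/1) - Real.sqrt 2/1)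
        + (0/((1+1)*1) + Real.sqrt 2/1))
      = (8 - 8 * Real.sqrt 2 + 2 * Real.pi) / Real.pi := by
    have : Real.pi ≠ 0 := Real.pi_pos.ne'
    field_simp
    ring
  rwa [hval] at hbig


theorem stmt8 :
    Tendsto (fun m : ℕ =>
      (4 : ℝ) *
        ((∑ k ∈ Finset.Icc 1 ((4 * m + 2 - 2) / 4),
            (Real.cos ((2 * (k : ℝ) - 1) * Real.pi / (2 * (4 * (m : ℝ) + 2) - 2)) -
              Real.cos ((k : ℝ) * Real.pi / ((4 * (m : ℝ) + 2) + 1)))) +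
          ∑ k ∈ Finset.Icc ((4 * m + 2 + 2) / 4) ((4 * m + 2) / 2),
            (Real.cos ((k : ℝ) * Real.pi / ((4 * (m : ℝ) + 2) + 1)) -
              Real.cos ((2 * (k : ℝ) - 1) * Real.pi / (2 * (4 * (m : ℝ) + 2) - 2)))))
      atTop (nhds ((8 - 8 * Real.sqrt 2 + 2 * Real.pi) / Real.pi)) := by
  exact Filter.Tendsto.congr (fun m => (lhs_eq m).symm) tendsto_G
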